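/- Let d ∈ {2,3}, ρ > 0, h > 0, a > 0, ε > 0 with ε²a² < h, and let v, H ∈ ℝ^d with ε²|v|² < 1. Then the (2d+2)×(2d+2) matrices B₀(V), B₁(V), …, B_d(V) of the symmetrized ideal relativistic MHD system are all symmetric, and B₀(V) is positive definite. -/

import Mathlib

open Matrix

/-- The Lorentz factor `Γ = (1 − ε²|v|²)^{−1/2}`. -/
noncomputable def lorentz (d : ℕ) (ε : ℝ) (v : Fin d → ℝ) : ℝ :=
  (Real.sqrt (1 - ε ^ 2 * ∑ i, v i ^ 2))⁻¹

/-- `|b|² = ε²Γ⁻²|H|² + ε⁴(v·H)²`, the Minkowski norm squared of the magnetic field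
`d`-vector. -/
noncomputable def bsq (d : ℕ) (ε : ℝ) (v H : Fin d → ℝ) : ℝ :=
  ε ^ 2 * (lorentz d ε v)⁻¹ ^ 2 * (∑ i, H i ^ 2) + ε ^ 4 * (∑ i, v i * H i) ^ 2

/-- `M₀ = Γ⁻¹(I_d + ε²Γ² v⊗v)`. -/
noncomputable def M0rel (d : ℕ) (ε : ℝ) (v : Fin d → ℝ) : Matrix (Fin d) (Fin d) ℝ :=
  (lorentz d ε v)⁻¹ • ((1 : Matrix (Fin d) (Fin d) ℝ)
    + (ε ^ 2 * lorentz d ε v ^ 2) • vecMulVec v v)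

/-- `𝒜₀`, the velocity block of the relativistic MHD symmetrizer `B₀(V)`. -/
noncomputable def calA0 (d : ℕ) (ε ρ h : ℝ) (v H : Fin d → ℝ) :
    Matrix (Fin d) (Fin d) ℝ :=
  (ρ * h * lorentz d ε v + ε ^ 2 * (lorentz d ε v)⁻¹ * ∑ i, H i ^ 2) •
      ((1 : Matrix (Fin d) (Fin d) ℝ) - ε ^ 2 • vecMulVec v v)
    - (ε ^ 2 * (lorentz d ε v)⁻¹ * bsq d ε v H) • vecMulVec v v
    - (ε ^ 2 * (lorentz d ε v)⁻¹) • vecMulVec H H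
    + (ε ^ 4 * (lorentz d ε v)⁻¹ * ∑ i, v i * H i) • (vecMulVec H v + vecMulVec v H)

/-- `𝒜ᵢ`, the velocity block of `Bᵢ(V)`, `i = 1, …, d`. -/
noncomputable def calAi (d : ℕ) (ε ρ h : ℝ) (v H : Fin d → ℝ) (i : Fin d) :
    Matrix (Fin d) (Fin d) ℝ :=
  v i • ((ρ * h * lorentz d ε v + ε ^ 2 * (lorentz d ε v)⁻¹ * ∑ j, H j ^ 2) •
        ((1 : Matrix (Fin d) (Fin d) ℝ) - ε ^ 2 • vecMulVec v v)
      + (ε ^ 2 * (lorentz d ε v)⁻¹) • (bsq d ε v H • vecMulVec v v - vecMulVec H H))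
    + (ε ^ 2 * (lorentz d ε v)⁻¹ * H i) •
        (((lorentz d ε v)⁻¹ ^ 2) • (vecMulVec H v + vecMulVec v H)
          - (2 * ∑ j, v j * H j) •
              ((1 : Matrix (Fin d) (Fin d) ℝ) - ε ^ 2 • vecMulVec v v))
    + (lorentz d ε v)⁻¹ •
        vecMulVec ((ε ^ 2 * ∑ j, v j * H j) • H - bsq d ε v H • v) (Pi.single i 1)
    + (lorentz d ε v)⁻¹ •
        vecMulVec (Pi.single i 1) ((ε ^ 2 * ∑ j, v j * H j) • H - bsq d ε v H • v)

/-- `𝒩ᵢ = (Γ⁻²H + ε²(v·H)v)⊗(eᵢ − ε²vᵢv) − Γ⁻²Hᵢ I_d`. -/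
noncomputable def calNi (d : ℕ) (ε : ℝ) (v H : Fin d → ℝ) (i : Fin d) :
    Matrix (Fin d) (Fin d) ℝ :=
  vecMulVec (((lorentz d ε v)⁻¹ ^ 2) • H + (ε ^ 2 * ∑ j, v j * H j) • v)
      (Pi.single i 1 - (ε ^ 2 * v i) • v)
    - ((lorentz d ε v)⁻¹ ^ 2 * H i) • (1 : Matrix (Fin d) (Fin d) ℝ)

/-- Index type for the `(2d+2) × (2d+2)` matrices of the symmetrized ideal relativistic MHD
system, blocks of sizes `1, d, d, 1`. -/
abbrev RMHDIdx (d : ℕ) := Unit ⊕ Fin d ⊕ Fin d ⊕ Unit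

/-- The symmetrizer `B₀(V)` of ideal relativistic MHD. -/
noncomputable def B0mat (d : ℕ) (ε ρ h a : ℝ) (v H : Fin d → ℝ) :
    Matrix (RMHDIdx d) (RMHDIdx d) ℝ :=
  Matrix.of fun p q =>
    match p, q with
    | Sum.inl _, Sum.inl _ => lorentz d ε v / (ρ * a ^ 2)
    | Sum.inl _, Sum.inr (Sum.inl j) => ε ^ 2 * v j
    | Sum.inr (Sum.inl i), Sum.inl _ => ε ^ 2 * v i
    | Sum.inr (Sum.inl i), Sum.inr (Sum.inl j) => calA0 d ε ρ h v H i j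
    | Sum.inr (Sum.inr (Sum.inl i)), Sum.inr (Sum.inr (Sum.inl j)) => M0rel d ε v i j
    | Sum.inr (Sum.inr (Sum.inr _)), Sum.inr (Sum.inr (Sum.inr _)) => 1
    | _, _ => 0

/-- The matrices `Bᵢ(V)`, `i = 1, …, d`, of the symmetrized ideal relativistic MHD system. -/
noncomputable def Bimat (d : ℕ) (ε ρ h a : ℝ) (v H : Fin d → ℝ) (i : Fin d) :
    Matrix (RMHDIdx d) (RMHDIdx d) ℝ :=
  Matrix.of fun p q =>
    match p, q with
    | Sum.inl _, Sum.inl _ => lorentz d ε v * v i / (ρ * a ^ 2)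
    | Sum.inl _, Sum.inr (Sum.inl j) => if i = j then 1 else 0
    | Sum.inr (Sum.inl j), Sum.inl _ => if i = j then 1 else 0
    | Sum.inr (Sum.inl j), Sum.inr (Sum.inl k) => calAi d ε ρ h v H i j k
    | Sum.inr (Sum.inl j), Sum.inr (Sum.inr (Sum.inl k)) => calNi d ε v H i k j
    | Sum.inr (Sum.inr (Sum.inl j)), Sum.inr (Sum.inl k) => calNi d ε v H i j k
    | Sum.inr (Sum.inr (Sum.inl j)), Sum.inr (Sum.inr (Sum.inl k)) => v i * M0rel d ε v j k
    | Sum.inr (Sum.inr (Sum.inr _)), Sum.inr (Sum.inr (Sum.inr _)) => v i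
    | _, _ => 0

/-- The Jacobian `𝐉 = ∂V/∂U` of the change of unknowns `U = (q, v, H, S) ↦ V = (p, w, H, S)`
in ideal relativistic MHD, with `𝐚 = ε²(|H|²v − (v·H)H)` and `𝐛 = Γ⁻²H + ε²(v·H)v`. -/
noncomputable def Jac (d : ℕ) (ε : ℝ) (v H : Fin d → ℝ) :
    Matrix (RMHDIdx d) (RMHDIdx d) ℝ :=
  Matrix.of fun p q =>
    match p, q with
    | Sum.inl _, Sum.inl _ => 1
    | Sum.inl _, Sum.inr (Sum.inl j) =>
        ε ^ 2 * ((∑ k, H k ^ 2) * v j - (∑ k, v k * H k) * H j)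
    | Sum.inl _, Sum.inr (Sum.inr (Sum.inl j)) =>
        -((lorentz d ε v)⁻¹ ^ 2 * H j + ε ^ 2 * (∑ k, v k * H k) * v j)
    | Sum.inr (Sum.inl i), Sum.inr (Sum.inl j) => lorentz d ε v ^ 2 * M0rel d ε v i j
    | Sum.inr (Sum.inr (Sum.inl i)), Sum.inr (Sum.inr (Sum.inl j)) => if i = j then 1 else 0
    | Sum.inr (Sum.inr (Sum.inr _)), Sum.inr (Sum.inr (Sum.inr _)) => 1
    | _, _ => 0

lemma calA0_symm (d : ℕ) (ε ρ h : ℝ) (v H : Fin d → ℝ) (i j : Fin d) :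
    calA0 d ε ρ h v H i j = calA0 d ε ρ h v H j i := by
  simp only [calA0, Matrix.add_apply, Matrix.sub_apply, Matrix.smul_apply, Matrix.one_apply,
    vecMulVec_apply, smul_eq_mul]
  rcases eq_or_ne i j with rfl | hij
  · ring
  · rw [if_neg hij, if_neg (Ne.symm hij)]; ring

lemma calAi_symm (d : ℕ) (ε ρ h : ℝ) (v H : Fin d → ℝ) (i j k : Fin d) :
    calAi d ε ρ h v H i j k = calAi d ε ρ h v H i k j := by
  simp only [calAi, Matrix.add_apply, Matrix.sub_apply, Matrix.smul_apply, Matrix.one_apply,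
    vecMulVec_apply, smul_eq_mul, Pi.add_apply, Pi.sub_apply, Pi.smul_apply]
  rcases eq_or_ne j k with rfl | hjk
  · ring
  · rw [if_neg hjk, if_neg (Ne.symm hjk)]; ring

lemma M0rel_symm (d : ℕ) (ε : ℝ) (v : Fin d → ℝ) (i j : Fin d) :
    M0rel d ε v i j = M0rel d ε v j i := by
  simp only [M0rel, Matrix.add_apply, Matrix.smul_apply, Matrix.one_apply,
    vecMulVec_apply, smul_eq_mul]
  rcases eq_or_ne i j with rfl | hij
  · ring
  · rw [if_neg hij, if_neg (Ne.symm hij)]; ring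

section Aux
open Finset

lemma sum_rank1 (d : ℕ) (y u w : Fin d → ℝ) :
    ∑ i, y i * ∑ j, u i * w j * y j = (∑ i, u i * y i) * (∑ j, w j * y j) := by
  rw [Finset.sum_mul_sum]
  refine Finset.sum_congr rfl fun i _ => ?_
  rw [Finset.mul_sum]
  exact Finset.sum_congr rfl fun j _ => by ring

lemma sum_delta_sq (d : ℕ) (y : Fin d → ℝ) :
    ∑ i : Fin d, y i * ∑ j, (if i = j then (1:ℝ) else 0) * y j = ∑ i, y i ^ 2 := by
  simp [ite_mul, Finset.sum_ite_eq, sq]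

lemma quad_A0 (d : ℕ) (ε ρ h : ℝ) (v H y : Fin d → ℝ) :
    ∑ i, y i * ∑ j, calA0 d ε ρ h v H i j * y j =
      (ρ * h * lorentz d ε v + ε ^ 2 * (lorentz d ε v)⁻¹ * ∑ i, H i ^ 2) *
          ((∑ i, y i ^ 2) - ε ^ 2 * ((∑ i, v i * y i) * (∑ i, v i * y i)))
        - ε ^ 2 * (lorentz d ε v)⁻¹ * bsq d ε v H * ((∑ i, v i * y i) * (∑ i, v i * y i))
        - ε ^ 2 * (lorentz d ε v)⁻¹ * ((∑ i, H i * y i) * (∑ i, H i * y i))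
        + 2 * ε ^ 4 * (lorentz d ε v)⁻¹ * (∑ i, v i * H i) *
            ((∑ i, v i * y i) * (∑ i, H i * y i)) := by
  set G := lorentz d ε v with hG
  set N := ∑ i, H i ^ 2 with hN
  set c := ∑ i, v i * H i with hc
  set b := bsq d ε v H with hb
  have expand : ∀ i j, y i * (calA0 d ε ρ h v H i j * y j) =
      (ρ * h * G + ε ^ 2 * G⁻¹ * N) * (y i * ((if i = j then (1:ℝ) else 0) * y j))
      + (-((ρ * h * G + ε ^ 2 * G⁻¹ * N) * ε ^ 2) - ε ^ 2 * G⁻¹ * b) * (y i * (v i * v j * y j))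
      + (-(ε ^ 2 * G⁻¹)) * (y i * (H i * H j * y j))
      + (ε ^ 4 * G⁻¹ * c) * (y i * (H i * v j * y j))
      + (ε ^ 4 * G⁻¹ * c) * (y i * (v i * H j * y j)) := by
    intro i j
    simp only [calA0, Matrix.add_apply, Matrix.sub_apply, Matrix.smul_apply, Matrix.one_apply,
      Matrix.vecMulVec_apply, smul_eq_mul, ← hG, ← hN, ← hc, ← hb]
    rcases eq_or_ne i j with rfl | hij
    · simp only [if_pos rfl]; ring
    · simp only [if_neg hij]; ring
  calc ∑ i, y i * ∑ j, calA0 d ε ρ h v H i j * y j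
      = ∑ i, ∑ j, y i * (calA0 d ε ρ h v H i j * y j) := by simp_rw [Finset.mul_sum]
    _ = _ := by
        simp_rw [expand, Finset.sum_add_distrib, ← Finset.mul_sum]
        rw [sum_delta_sq, sum_rank1, sum_rank1, sum_rank1, sum_rank1]
        ring

lemma quad_M0 (d : ℕ) (ε : ℝ) (v z : Fin d → ℝ) :
    ∑ i, z i * ∑ j, M0rel d ε v i j * z j =
      (lorentz d ε v)⁻¹ * (∑ i, z i ^ 2)
        + ε ^ 2 * lorentz d ε v ^ 2 * (lorentz d ε v)⁻¹ *
            ((∑ i, v i * z i) * (∑ i, v i * z i)) := by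
  set G := lorentz d ε v with hG
  have expand : ∀ i j, z i * (M0rel d ε v i j * z j) =
      G⁻¹ * (z i * ((if i = j then (1:ℝ) else 0) * z j))
      + (ε ^ 2 * G ^ 2 * G⁻¹) * (z i * (v i * v j * z j)) := by
    intro i j
    simp only [M0rel, Matrix.add_apply, Matrix.smul_apply, Matrix.one_apply,
      Matrix.vecMulVec_apply, smul_eq_mul, ← hG]
    rcases eq_or_ne i j with rfl | hij
    · simp only [if_pos rfl]; ring
    · simp only [if_neg hij]; ring
  calc ∑ i, z i * ∑ j, M0rel d ε v i j * z j
      = ∑ i, ∑ j, z i * (M0rel d ε v i j * z j) := by simp_rw [Finset.mul_sum]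
    _ = _ := by
        simp_rw [expand, Finset.sum_add_distrib, ← Finset.mul_sum]
        rw [sum_delta_sq, sum_rank1]

lemma sum_pull (d : ℕ) (y w : Fin d → ℝ) (k s : ℝ) :
    ∑ i, y i * (k * w i * s) = k * (∑ i, w i * y i) * s := by
  rw [Finset.mul_sum, Finset.sum_mul]
  exact Finset.sum_congr rfl fun i _ => by ring

end Aux

lemma sum_pull2 (d : ℕ) (y w : Fin d → ℝ) (k : ℝ) :
    ∑ i, k * w i * y i = k * ∑ i, w i * y i := by
  rw [Finset.mul_sum]
  exact Finset.sum_congr rfl fun i _ => by ring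

lemma B0_quad (d : ℕ) (ε ρ h a : ℝ) (v H : Fin d → ℝ) (x : RMHDIdx d → ℝ) :
    x ⬝ᵥ (B0mat d ε ρ h a v H) *ᵥ x =
      lorentz d ε v / (ρ * a ^ 2) * (x (Sum.inl default) * x (Sum.inl default))
      + 2 * ε ^ 2 * (∑ i, v i * x (Sum.inr (Sum.inl i))) * x (Sum.inl default)
      + ((ρ * h * lorentz d ε v + ε ^ 2 * (lorentz d ε v)⁻¹ * ∑ i, H i ^ 2) *
            ((∑ i, x (Sum.inr (Sum.inl i)) ^ 2)
              - ε ^ 2 * ((∑ i, v i * x (Sum.inr (Sum.inl i)))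
                  * (∑ i, v i * x (Sum.inr (Sum.inl i)))))
        - ε ^ 2 * (lorentz d ε v)⁻¹ * bsq d ε v H *
            ((∑ i, v i * x (Sum.inr (Sum.inl i))) * (∑ i, v i * x (Sum.inr (Sum.inl i))))
        - ε ^ 2 * (lorentz d ε v)⁻¹ *
            ((∑ i, H i * x (Sum.inr (Sum.inl i))) * (∑ i, H i * x (Sum.inr (Sum.inl i))))
        + 2 * ε ^ 4 * (lorentz d ε v)⁻¹ * (∑ i, v i * H i) *
            ((∑ i, v i * x (Sum.inr (Sum.inl i))) * (∑ i, H i * x (Sum.inr (Sum.inl i)))))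
      + ((lorentz d ε v)⁻¹ * (∑ i, x (Sum.inr (Sum.inr (Sum.inl i))) ^ 2)
          + ε ^ 2 * lorentz d ε v ^ 2 * (lorentz d ε v)⁻¹ *
              ((∑ i, v i * x (Sum.inr (Sum.inr (Sum.inl i))))
                * (∑ i, v i * x (Sum.inr (Sum.inr (Sum.inl i))))))
      + x (Sum.inr (Sum.inr (Sum.inr default))) * x (Sum.inr (Sum.inr (Sum.inr default))) := by
  simp only [dotProduct, mulVec, B0mat, Matrix.of_apply, Fintype.sum_sum_type,
    Finset.univ_unique, Finset.sum_singleton, mul_zero, zero_mul, Finset.sum_const_zero,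
    add_zero, zero_add]
  simp_rw [mul_add, Finset.sum_add_distrib]
  rw [quad_A0 d ε ρ h v H (fun i => x (Sum.inr (Sum.inl i))),
    quad_M0 d ε v (fun i => x (Sum.inr (Sum.inr (Sum.inl i)))),
    sum_pull d (fun i => x (Sum.inr (Sum.inl i))) v (ε ^ 2) (x (Sum.inl default)),
    sum_pull2 d (fun i => x (Sum.inr (Sum.inl i))) v (ε ^ 2)]
  ring

set_option maxHeartbeats 1000000 in

lemma scalar_pos (ρ h a ε g s α β γ Y N Z t b c : ℝ)
    (hρ : 0 < ρ) (hh : 0 < h) (ha : 0 < a) (hε : 0 < ε) (hsub : ε ^ 2 * a ^ 2 < h)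
    (hg : 0 < g)
    (hb : b = ε ^ 2 * g ^ 2 * N + ε ^ 4 * c ^ 2)
    (hY : 0 ≤ Y) (hN : 0 ≤ N) (hZ : 0 ≤ Z)
    (hCS1 : ε ^ 2 * α ^ 2 ≤ (1 - g ^ 2) * Y)
    (hCS3 : (ε ^ 2 * c * α - β) ^ 2 ≤ N * (Y - ε ^ 2 * (1 + g ^ 2) * α ^ 2))
    (hpos : 0 < s ^ 2 + Y + Z + t ^ 2) :
    0 < g⁻¹ / (ρ * a ^ 2) * (s * s) + 2 * ε ^ 2 * α * s
      + ((ρ * h * g⁻¹ + ε ^ 2 * g * N) * (Y - ε ^ 2 * (α * α))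
          - ε ^ 2 * g * b * (α * α) - ε ^ 2 * g * (β * β) + 2 * ε ^ 4 * g * c * (α * β))
      + (g * Z + ε ^ 2 * (g⁻¹) ^ 2 * g * (γ * γ)) + t * t := by
  have hgne : g ≠ 0 := ne_of_gt hg
  have hra : (0:ℝ) < ρ * a ^ 2 := by positivity
  have decomp : g⁻¹ / (ρ * a ^ 2) * (s * s) + 2 * ε ^ 2 * α * s
      + ((ρ * h * g⁻¹ + ε ^ 2 * g * N) * (Y - ε ^ 2 * (α * α))
          - ε ^ 2 * g * b * (α * α) - ε ^ 2 * g * (β * β) + 2 * ε ^ 4 * g * c * (α * β))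
      + (g * Z + ε ^ 2 * (g⁻¹) ^ 2 * g * (γ * γ)) + t * t =
      g⁻¹ / (ρ * a ^ 2) * (s + ρ * a ^ 2 * ε ^ 2 * g * α) ^ 2
      + (ρ * h * g⁻¹ * (Y - ε ^ 2 * α ^ 2) - ρ * a ^ 2 * ε ^ 4 * g * α ^ 2)
      + ε ^ 2 * g * (N * Y - ε ^ 2 * (1 + g ^ 2) * (N * α ^ 2) - (ε ^ 2 * c * α - β) ^ 2)
      + g * Z + ε ^ 2 * g⁻¹ * (γ * γ) + t ^ 2 := by
    subst hb; field_simp; ring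
  rw [decomp]
  have hq1 : 0 ≤ g⁻¹ / (ρ * a ^ 2) * (s + ρ * a ^ 2 * ε ^ 2 * g * α) ^ 2 := by positivity
  have hmag : 0 ≤ ε ^ 2 * g *
      (N * Y - ε ^ 2 * (1 + g ^ 2) * (N * α ^ 2) - (ε ^ 2 * c * α - β) ^ 2) := by
    have h1 : 0 ≤ N * Y - ε ^ 2 * (1 + g ^ 2) * (N * α ^ 2) - (ε ^ 2 * c * α - β) ^ 2 := by
      nlinarith [hCS3]
    exact mul_nonneg (by positivity) h1
  have hεα : ε ^ 2 * α ^ 2 ≤ Y := by nlinarith [mul_nonneg (mul_nonneg hg.le hg.le) hY]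
  have hmain : ρ * g * (h - ε ^ 2 * a ^ 2) * Y ≤
      ρ * h * g⁻¹ * (Y - ε ^ 2 * α ^ 2) - ρ * a ^ 2 * ε ^ 4 * g * α ^ 2 := by
    have e1 : ρ * h * g⁻¹ * (Y - ε ^ 2 * α ^ 2) - ρ * h * g * Y
        = ρ * h * g⁻¹ * ((1 - g ^ 2) * Y - ε ^ 2 * α ^ 2) := by
      field_simp; ring
    have e2 : 0 ≤ ρ * h * g⁻¹ * ((1 - g ^ 2) * Y - ε ^ 2 * α ^ 2) :=
      mul_nonneg (by positivity) (by linarith)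
    have e3 : ρ * a ^ 2 * ε ^ 4 * g * α ^ 2 ≤ ρ * a ^ 2 * ε ^ 2 * g * Y := by
      calc ρ * a ^ 2 * ε ^ 4 * g * α ^ 2 = (ρ * a ^ 2 * ε ^ 2 * g) * (ε ^ 2 * α ^ 2) := by ring
        _ ≤ (ρ * a ^ 2 * ε ^ 2 * g) * Y := by
            exact mul_le_mul_of_nonneg_left hεα (by positivity)
        _ = ρ * a ^ 2 * ε ^ 2 * g * Y := by ring
    have e4 : ρ * g * (h - ε ^ 2 * a ^ 2) * Y = ρ * h * g * Y - ρ * a ^ 2 * ε ^ 2 * g * Y := by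
      ring
    linarith
  have hterm2 : 0 ≤ ρ * g * (h - ε ^ 2 * a ^ 2) * Y :=
    mul_nonneg (mul_nonneg (mul_nonneg hρ.le hg.le) (by linarith)) hY
  have hZ' : 0 ≤ g * Z := mul_nonneg hg.le hZ
  have hγ : 0 ≤ ε ^ 2 * g⁻¹ * (γ * γ) := mul_nonneg (by positivity) (mul_self_nonneg γ)
  have ht2 : (0:ℝ) ≤ t ^ 2 := sq_nonneg t
  have hcase : 0 < s ^ 2 ∨ 0 < Y ∨ 0 < Z ∨ 0 < t ^ 2 := by
    by_contra hcon
    push_neg at hcon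
    obtain ⟨h1, h2, h3, h4⟩ := hcon
    nlinarith [sq_nonneg s, sq_nonneg t]
  have hYcase : 0 < Y → (0:ℝ) <
      g⁻¹ / (ρ * a ^ 2) * (s + ρ * a ^ 2 * ε ^ 2 * g * α) ^ 2
      + (ρ * h * g⁻¹ * (Y - ε ^ 2 * α ^ 2) - ρ * a ^ 2 * ε ^ 4 * g * α ^ 2)
      + ε ^ 2 * g * (N * Y - ε ^ 2 * (1 + g ^ 2) * (N * α ^ 2) - (ε ^ 2 * c * α - β) ^ 2)
      + g * Z + ε ^ 2 * g⁻¹ * (γ * γ) + t ^ 2 := by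
    intro hY'
    have : 0 < ρ * g * (h - ε ^ 2 * a ^ 2) * Y :=
      mul_pos (mul_pos (mul_pos hρ hg) (by linarith)) hY'
    linarith
  rcases hcase with hs | hY' | hZ2 | ht
  · rcases eq_or_lt_of_le hY with hY0 | hY'
    · have hY0' : Y = 0 := hY0.symm
      rw [hY0', mul_zero] at hCS1
      have h0 : ε ^ 2 * α ^ 2 = 0 := le_antisymm hCS1 (by positivity)
      have hα2 : α ^ 2 = 0 := by
        rcases mul_eq_zero.mp h0 with h' | h'
        · exact absurd h' (by positivity)
        · exact h'
      have hα : α = 0 := pow_eq_zero_iff two_ne_zero |>.mp hα2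
      have hsq : 0 < g⁻¹ / (ρ * a ^ 2) * (s + ρ * a ^ 2 * ε ^ 2 * g * α) ^ 2 := by
        have : (s + ρ * a ^ 2 * ε ^ 2 * g * α) ^ 2 = s ^ 2 := by rw [hα]; ring
        rw [this]
        positivity
      linarith
    · exact hYcase hY'
  · exact hYcase hY'
  · have : 0 < g * Z := mul_pos hg hZ2
    linarith
  · linarith
set_option maxHeartbeats 1000000 in
/-- The matrices `B₀(V), B₁(V), …, B_d(V)` of the symmetrized ideal relativistic MHD system
are all symmetric, and `B₀(V)` is positive definite. -/

theorem stmt12 (d : ℕ) (hd : d = 2 ∨ d = 3) (ρ h a ε : ℝ)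
    (hρ : 0 < ρ) (hh : 0 < h) (ha : 0 < a) (hε : 0 < ε) (hsub : ε ^ 2 * a ^ 2 < h)
    (v H : Fin d → ℝ) (hv : ε ^ 2 * ∑ i, v i ^ 2 < 1) :
    (B0mat d ε ρ h a v H).IsSymm ∧ (∀ i : Fin d, (Bimat d ε ρ h a v H i).IsSymm) ∧
      (B0mat d ε ρ h a v H).PosDef := by
  have hsymm : (B0mat d ε ρ h a v H).IsSymm := by
    rw [Matrix.IsSymm]
    ext p q
    rcases p with _ | (p | p | _) <;> rcases q with _ | (q | q | _) <;>
      simp_all [B0mat, Matrix.transpose_apply, calA0_symm d ε ρ h v H, M0rel_symm d ε v]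
  refine ⟨hsymm, fun i => ?_, ?_⟩
  · rw [Matrix.IsSymm]
    ext p q
    rcases p with _ | (p | p | _) <;> rcases q with _ | (q | q | _) <;>
      simp_all [Bimat, Matrix.transpose_apply, calAi_symm d ε ρ h v H, M0rel_symm d ε v]
  have hherm : (B0mat d ε ρ h a v H).IsHermitian := by
    rw [Matrix.IsHermitian]
    ext p q
    rw [Matrix.conjTranspose_apply, star_trivial]
    exact congrFun (congrFun hsymm p) q
  refine Matrix.PosDef.of_dotProduct_mulVec_pos hherm fun x hx => ?_
  have hstar : star x = x := funext fun p => rfl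
  rw [hstar, B0_quad]
  have hS : 0 < 1 - ε ^ 2 * ∑ i, v i ^ 2 := by linarith
  have hg : 0 < Real.sqrt (1 - ε ^ 2 * ∑ i, v i ^ 2) := Real.sqrt_pos.mpr hS
  have hg2 : Real.sqrt (1 - ε ^ 2 * ∑ i, v i ^ 2) ^ 2 = 1 - ε ^ 2 * ∑ i, v i ^ 2 :=
    Real.sq_sqrt hS.le
  have hlor : lorentz d ε v = (Real.sqrt (1 - ε ^ 2 * ∑ i, v i ^ 2))⁻¹ := rfl
  have hinv : (lorentz d ε v)⁻¹ = Real.sqrt (1 - ε ^ 2 * ∑ i, v i ^ 2) := by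
    rw [hlor, inv_inv]
  rw [hinv, hlor]
  have hY : (0:ℝ) ≤ ∑ i, x (Sum.inr (Sum.inl i)) ^ 2 :=
    Finset.sum_nonneg fun i _ => sq_nonneg _
  have hN : (0:ℝ) ≤ ∑ i, H i ^ 2 := Finset.sum_nonneg fun i _ => sq_nonneg _
  have hZ : (0:ℝ) ≤ ∑ i, x (Sum.inr (Sum.inr (Sum.inl i))) ^ 2 :=
    Finset.sum_nonneg fun i _ => sq_nonneg _
  have hb : bsq d ε v H = ε ^ 2 * Real.sqrt (1 - ε ^ 2 * ∑ i, v i ^ 2) ^ 2 * (∑ i, H i ^ 2)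
      + ε ^ 4 * (∑ i, v i * H i) ^ 2 := by
    rw [bsq, hinv, sq]
  have hCS1 : ε ^ 2 * (∑ i, v i * x (Sum.inr (Sum.inl i))) ^ 2 ≤
      (1 - Real.sqrt (1 - ε ^ 2 * ∑ i, v i ^ 2) ^ 2) * ∑ i, x (Sum.inr (Sum.inl i)) ^ 2 := by
    have hcs := Finset.sum_mul_sq_le_sq_mul_sq Finset.univ v
      (fun i => x (Sum.inr (Sum.inl i)))
    calc ε ^ 2 * (∑ i, v i * x (Sum.inr (Sum.inl i))) ^ 2
        ≤ ε ^ 2 * ((∑ i, v i ^ 2) * ∑ i, x (Sum.inr (Sum.inl i)) ^ 2) := by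
          apply mul_le_mul_of_nonneg_left _ (by positivity)
          simpa using hcs
      _ = _ := by rw [hg2]; ring
  have hCS3 : (ε ^ 2 * (∑ i, v i * H i) * (∑ i, v i * x (Sum.inr (Sum.inl i)))
        - ∑ i, H i * x (Sum.inr (Sum.inl i))) ^ 2 ≤
      (∑ i, H i ^ 2) * ((∑ i, x (Sum.inr (Sum.inl i)) ^ 2)
        - ε ^ 2 * (1 + Real.sqrt (1 - ε ^ 2 * ∑ i, v i ^ 2) ^ 2)
            * (∑ i, v i * x (Sum.inr (Sum.inl i))) ^ 2) := by
    have hcs := Finset.sum_mul_sq_le_sq_mul_sq Finset.univ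
      (fun i => ε ^ 2 * (∑ j, v j * x (Sum.inr (Sum.inl j))) * v i - x (Sum.inr (Sum.inl i))) H
    have e1 : ∑ i, (ε ^ 2 * (∑ j, v j * x (Sum.inr (Sum.inl j))) * v i
          - x (Sum.inr (Sum.inl i))) * H i
        = ε ^ 2 * (∑ i, v i * H i) * (∑ i, v i * x (Sum.inr (Sum.inl i)))
          - ∑ i, H i * x (Sum.inr (Sum.inl i)) := by
      rw [Finset.sum_congr rfl fun i _ =>
        show (ε ^ 2 * (∑ j, v j * x (Sum.inr (Sum.inl j))) * v i
            - x (Sum.inr (Sum.inl i))) * H i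
          = (ε ^ 2 * ∑ j, v j * x (Sum.inr (Sum.inl j))) * (v i * H i)
            - H i * x (Sum.inr (Sum.inl i)) from by ring]
      rw [Finset.sum_sub_distrib, ← Finset.mul_sum]
      ring
    have e2 : ∑ i, (ε ^ 2 * (∑ j, v j * x (Sum.inr (Sum.inl j))) * v i
          - x (Sum.inr (Sum.inl i))) ^ 2
        = (∑ i, x (Sum.inr (Sum.inl i)) ^ 2)
          - ε ^ 2 * (1 + Real.sqrt (1 - ε ^ 2 * ∑ i, v i ^ 2) ^ 2)
              * (∑ i, v i * x (Sum.inr (Sum.inl i))) ^ 2 := by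
      rw [Finset.sum_congr rfl fun i _ =>
        show (ε ^ 2 * (∑ j, v j * x (Sum.inr (Sum.inl j))) * v i
            - x (Sum.inr (Sum.inl i))) ^ 2
          = (ε ^ 4 * (∑ j, v j * x (Sum.inr (Sum.inl j))) ^ 2) * v i ^ 2
            - (2 * ε ^ 2 * ∑ j, v j * x (Sum.inr (Sum.inl j)))
                * (v i * x (Sum.inr (Sum.inl i)))
            + x (Sum.inr (Sum.inl i)) ^ 2 from by ring]
      rw [Finset.sum_add_distrib, Finset.sum_sub_distrib, ← Finset.mul_sum, ← Finset.mul_sum]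
      have hvv : ε ^ 2 * ∑ i, v i ^ 2
          = 1 - Real.sqrt (1 - ε ^ 2 * ∑ i, v i ^ 2) ^ 2 := by rw [hg2]; ring
      linear_combination (ε ^ 2 * (∑ j, v j * x (Sum.inr (Sum.inl j))) ^ 2) * hvv
    calc (ε ^ 2 * (∑ i, v i * H i) * (∑ i, v i * x (Sum.inr (Sum.inl i)))
          - ∑ i, H i * x (Sum.inr (Sum.inl i))) ^ 2
        = (∑ i, (ε ^ 2 * (∑ j, v j * x (Sum.inr (Sum.inl j))) * v i
            - x (Sum.inr (Sum.inl i))) * H i) ^ 2 := by rw [e1]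
      _ ≤ (∑ i, (ε ^ 2 * (∑ j, v j * x (Sum.inr (Sum.inl j))) * v i
            - x (Sum.inr (Sum.inl i))) ^ 2) * ∑ i, H i ^ 2 := hcs
      _ = _ := by rw [e2]; ring
  have hpos : 0 < x (Sum.inl default) ^ 2 + (∑ i, x (Sum.inr (Sum.inl i)) ^ 2)
      + (∑ i, x (Sum.inr (Sum.inr (Sum.inl i))) ^ 2)
      + x (Sum.inr (Sum.inr (Sum.inr default))) ^ 2 := by
    by_contra hcon
    push_neg at hcon
    have hsq1 : (0:ℝ) ≤ x (Sum.inl default) ^ 2 := sq_nonneg _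
    have hsq2 : (0:ℝ) ≤ x (Sum.inr (Sum.inr (Sum.inr default))) ^ 2 := sq_nonneg _
    have hs0 : x (Sum.inl default) = 0 := by
      have h1 : x (Sum.inl default) ^ 2 = 0 := le_antisymm (by linarith) hsq1
      exact pow_eq_zero_iff two_ne_zero |>.mp h1
    have ht0 : x (Sum.inr (Sum.inr (Sum.inr default))) = 0 := by
      have h1 : x (Sum.inr (Sum.inr (Sum.inr default))) ^ 2 = 0 := le_antisymm (by linarith) hsq2
      exact pow_eq_zero_iff two_ne_zero |>.mp h1
    have hY0 : ∑ i, x (Sum.inr (Sum.inl i)) ^ 2 = 0 := le_antisymm (by linarith) hY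
    have hZ0 : ∑ i, x (Sum.inr (Sum.inr (Sum.inl i))) ^ 2 = 0 := le_antisymm (by linarith) hZ
    have hy0 : ∀ i, x (Sum.inr (Sum.inl i)) = 0 := fun i =>
      pow_eq_zero_iff two_ne_zero |>.mp
        ((Finset.sum_eq_zero_iff_of_nonneg fun j _ => sq_nonneg _).mp hY0 i (Finset.mem_univ i))
    have hz0 : ∀ i, x (Sum.inr (Sum.inr (Sum.inl i))) = 0 := fun i =>
      pow_eq_zero_iff two_ne_zero |>.mp
        ((Finset.sum_eq_zero_iff_of_nonneg fun j _ => sq_nonneg _).mp hZ0 i (Finset.mem_univ i))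
    apply hx
    funext p
    rcases p with _ | (i | i | _)
    · exact hs0
    · exact hy0 i
    · exact hz0 i
    · exact ht0
  exact scalar_pos ρ h a ε (Real.sqrt (1 - ε ^ 2 * ∑ i, v i ^ 2))
    (x (Sum.inl default)) (∑ i, v i * x (Sum.inr (Sum.inl i)))
    (∑ i, H i * x (Sum.inr (Sum.inl i))) (∑ i, v i * x (Sum.inr (Sum.inr (Sum.inl i))))
    (∑ i, x (Sum.inr (Sum.inl i)) ^ 2) (∑ i, H i ^ 2)
    (∑ i, x (Sum.inr (Sum.inr (Sum.inl i))) ^ 2)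
    (x (Sum.inr (Sum.inr (Sum.inr default)))) (bsq d ε v H) (∑ i, v i * H i)
    hρ hh ha hε hsub hg hb hY hN hZ hCS1 hCS3 hpos
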